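/- Let X_1 ⊆ J(10,3) be a part of a perfect 2-coloring with quotient matrix [[12,9],[9,12]]. For any five distinct elements a,b,c,d,e ∈ {1,...,10}, writing ab* for the set of all 3-subsets containing {a,b}, and x̄ = 1 if the 3-subset x is in X_1 and 0 otherwise, and S̄ = |S ∩ X_1| for a set S of 3-subsets, we have: (ab*)̄ − (ac*)̄ = 3( {a,b,d}̄ + {a,b,e}̄ + {c,d,e}̄ − {a,c,d}̄ − {a,c,e}̄ − {b,d,e}̄ ). -/

import Mathlib

/-- The Johnson graph `J(n,k)`: vertices are the `k`-element subsets of an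
`n`-element set, two vertices adjacent when their intersection has `k-1` elements. -/
def johnsonGraph (n k : ℕ) : SimpleGraph {s : Finset (Fin n) // s.card = k} where
  Adj x y := (x.1 ∩ y.1).card = k - 1 ∧ x ≠ y
  symm := by
    constructor
    intro x y h
    exact ⟨by rw [Finset.inter_comm]; exact h.1, h.2.symm⟩
  loopless := by
    constructor
    intro x h
    exact h.2 rfl

instance (n k : ℕ) : DecidableRel (johnsonGraph n k).Adj :=
  fun x y => inferInstanceAs (Decidable ((x.1 ∩ y.1).card = k - 1 ∧ x ≠ y))

/-- A perfect 2-coloring of a finite graph `G` with quotient matrix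
`[[p11, p12], [p21, p22]]`: a partition of the vertices into nonempty parts
`X1`, `X2` such that every vertex of `Xi` has exactly `p i j` neighbors in `Xj`. -/
def IsPerfect2Coloring {V : Type*} [Fintype V] [DecidableEq V]
    (G : SimpleGraph V) [DecidableRel G.Adj] (X1 X2 : Finset V)
    (p11 p12 p21 p22 : ℕ) : Prop :=
  X1 ∪ X2 = Finset.univ ∧ Disjoint X1 X2 ∧ X1.Nonempty ∧ X2.Nonempty ∧
  (∀ v ∈ X1, (G.neighborFinset v ∩ X1).card = p11 ∧
             (G.neighborFinset v ∩ X2).card = p12) ∧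
  (∀ v ∈ X2, (G.neighborFinset v ∩ X1).card = p21 ∧
             (G.neighborFinset v ∩ X2).card = p22)

/-- `ab*`: the set of vertices of `J(10,3)` (3-subsets of `{0,…,9}`) containing
both `a` and `b`. -/
def star (a b : Fin 10) : Finset {s : Finset (Fin 10) // s.card = 3} :=
  Finset.univ.filter (fun v => a ∈ v.1 ∧ b ∈ v.1)

/-- The indicator (as an integer) of whether the 3-subset `s` belongs to the
part `X1` of the coloring. -/
def ind (X1 : Finset {s : Finset (Fin 10) // s.card = 3})
    (s : Finset (Fin 10)) : ℤ :=
  (X1.filter (fun v => v.1 = s)).card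

lemma triple_card {x y z : Fin 10} (hxy : x ≠ y) (hxz : x ≠ z) (hyz : y ≠ z) :
    ({x, y, z} : Finset (Fin 10)).card = 3 := by
  rw [Finset.card_insert_of_notMem (by simp [hxy, hxz]),
    Finset.card_insert_of_notMem (by simp [hyz]), Finset.card_singleton]

lemma eq_triple {w : Finset (Fin 10)} {x y z : Fin 10} (hxy : x ≠ y) (hxz : x ≠ z) (hyz : y ≠ z)
    (hw : w.card = 3) (hx : x ∈ w) (hy : y ∈ w) (hz : z ∈ w) : w = ({x, y, z} : Finset (Fin 10)) := by
  refine (Finset.eq_of_subset_of_card_le ?_ ?_).symm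
  · simp [Finset.insert_subset_iff, hx, hy, hz]
  · rw [hw, triple_card hxy hxz hyz]

lemma adj_iff {w : Finset (Fin 10)} {x y z : Fin 10} (hxy : x ≠ y) (hxz : x ≠ z) (hyz : y ≠ z)
    (hw : w.card = 3) :
    (w ∩ ({x, y, z} : Finset (Fin 10))).card = 2 ↔
      (w ≠ {x, y, z} ∧ ((x ∈ w ∧ y ∈ w) ∨ (x ∈ w ∧ z ∈ w) ∨ (y ∈ w ∧ z ∈ w))) := by
  constructor
  · intro h2
    have hne : w ≠ ({x, y, z} : Finset (Fin 10)) := by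
      intro he
      rw [he, Finset.inter_self, triple_card hxy hxz hyz] at h2
      omega
    refine ⟨hne, ?_⟩
    obtain ⟨p, q, hpq, hpqe⟩ := Finset.card_eq_two.mp h2
    have hp : p ∈ w ∩ ({x, y, z} : Finset (Fin 10)) := by rw [hpqe]; simp
    have hq : q ∈ w ∩ ({x, y, z} : Finset (Fin 10)) := by rw [hpqe]; simp
    simp only [Finset.mem_inter, Finset.mem_insert, Finset.mem_singleton] at hp hq
    obtain ⟨hpw, hp'⟩ := hp
    obtain ⟨hqw, hq'⟩ := hq
    rcases hp' with rfl | rfl | rfl <;> rcases hq' with rfl | rfl | rfl <;> tauto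
  · rintro ⟨hne, hmem⟩
    have h1 : (w ∩ ({x, y, z} : Finset (Fin 10))).card ≤ 3 :=
      le_trans (Finset.card_le_card Finset.inter_subset_left) (le_of_eq hw)
    have h2 : 2 ≤ (w ∩ ({x, y, z} : Finset (Fin 10))).card := by
      rcases hmem with ⟨ha, hb⟩ | ⟨ha, hb⟩ | ⟨ha, hb⟩
      · have hsub : ({x, y} : Finset (Fin 10)) ⊆ w ∩ {x, y, z} := by
          simp [Finset.insert_subset_iff, ha, hb]
        have := Finset.card_le_card hsub
        rwa [Finset.card_insert_of_notMem (by simp [hxy]), Finset.card_singleton] at this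
      · have hsub : ({x, z} : Finset (Fin 10)) ⊆ w ∩ {x, y, z} := by
          simp [Finset.insert_subset_iff, ha, hb]
        have := Finset.card_le_card hsub
        rwa [Finset.card_insert_of_notMem (by simp [hxz]), Finset.card_singleton] at this
      · have hsub : ({y, z} : Finset (Fin 10)) ⊆ w ∩ {x, y, z} := by
          simp [Finset.insert_subset_iff, ha, hb]
        have := Finset.card_le_card hsub
        rwa [Finset.card_insert_of_notMem (by simp [hyz]), Finset.card_singleton] at this
    have h3 : (w ∩ ({x, y, z} : Finset (Fin 10))).card ≠ 3 := by
      intro hc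
      have hiw : w ∩ ({x, y, z} : Finset (Fin 10)) = w :=
        Finset.eq_of_subset_of_card_le Finset.inter_subset_left (by omega)
      have hsub : w ⊆ ({x, y, z} : Finset (Fin 10)) := hiw ▸ Finset.inter_subset_right
      exact hne (Finset.eq_of_subset_of_card_le hsub (by rw [triple_card hxy hxz hyz, hw]))
    omega

lemma key_eq (X1 X2 : Finset {s : Finset (Fin 10) // s.card = 3})
    (h : IsPerfect2Coloring (johnsonGraph 10 3) X1 X2 12 9 9 12)
    (x y z : Fin 10) (hxy : x ≠ y) (hxz : x ≠ z) (hyz : y ≠ z) :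
    ((star x y ∩ X1).card : ℤ) + ((star x z ∩ X1).card : ℤ) + ((star y z ∩ X1).card : ℤ)
      = 6 * ind X1 {x, y, z} + 9 := by
  set v : {s : Finset (Fin 10) // s.card = 3} := ⟨{x, y, z}, triple_card hxy hxz hyz⟩ with hv
  -- indicator value
  have hind : ind X1 ({x, y, z} : Finset (Fin 10)) = if v ∈ X1 then 1 else 0 := by
    unfold ind
    rw [show X1.filter (fun w => w.1 = ({x, y, z} : Finset (Fin 10)))
        = X1.filter (fun w => w = v) from Finset.filter_congr (by
          intro w _
          simp [hv, Subtype.ext_iff])]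
    rw [Finset.filter_eq']
    split <;> simp
  -- neighbor set description
  have hN : (johnsonGraph 10 3).neighborFinset v
      = ((star x y ∪ star x z ∪ star y z).erase v) := by
    ext w
    rw [SimpleGraph.mem_neighborFinset, Finset.mem_erase, Finset.mem_union, Finset.mem_union]
    have hadj : (johnsonGraph 10 3).Adj v w ↔ ((v.1 ∩ w.1).card = 2 ∧ v ≠ w) := by
      simp [johnsonGraph]
    rw [hadj, Finset.inter_comm]
    have hv1 : v.1 = ({x, y, z} : Finset (Fin 10)) := rfl
    rw [hv1, adj_iff hxy hxz hyz w.2]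
    simp only [_root_.star, Finset.mem_filter, Finset.mem_univ, true_and]
    constructor
    · rintro ⟨⟨h1, h2⟩, h3⟩
      exact ⟨h3.symm, by tauto⟩
    · rintro ⟨h1, h2⟩
      have : w.1 ≠ ({x, y, z} : Finset (Fin 10)) := by
        intro he
        exact h1 (Subtype.ext (by rw [he, hv1]))
      exact ⟨⟨this, by tauto⟩, h1.symm⟩
  -- v belongs to all three stars
  have hvA : v ∈ star x y := by simp [_root_.star, hv]
  have hvB : v ∈ star x z := by simp [_root_.star, hv]
  have hvC : v ∈ star y z := by simp [_root_.star, hv]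
  -- pairwise disjointness of erased stars
  have hdAB : Disjoint ((star x y).erase v ∩ X1) ((star x z).erase v ∩ X1) := by
    rw [Finset.disjoint_left]
    intro w hwA hwB
    simp only [Finset.mem_inter, Finset.mem_erase, _root_.star, Finset.mem_filter,
      Finset.mem_univ, true_and] at hwA hwB
    exact hwA.1.1 (Subtype.ext (eq_triple hxy hxz hyz w.2 hwA.1.2.1 hwA.1.2.2 hwB.1.2.2))
  have hdAC : Disjoint ((star x y).erase v ∩ X1) ((star y z).erase v ∩ X1) := by
    rw [Finset.disjoint_left]
    intro w hwA hwB
    simp only [Finset.mem_inter, Finset.mem_erase, _root_.star, Finset.mem_filter,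
      Finset.mem_univ, true_and] at hwA hwB
    exact hwA.1.1 (Subtype.ext (eq_triple hxy hxz hyz w.2 hwA.1.2.1 hwA.1.2.2 hwB.1.2.2))
  have hdBC : Disjoint ((star x z).erase v ∩ X1) ((star y z).erase v ∩ X1) := by
    rw [Finset.disjoint_left]
    intro w hwA hwB
    simp only [Finset.mem_inter, Finset.mem_erase, _root_.star, Finset.mem_filter,
      Finset.mem_univ, true_and] at hwA hwB
    exact hwA.1.1 (Subtype.ext (eq_triple hxy hxz hyz w.2 hwA.1.2.1 hwB.1.2.1 hwA.1.2.2))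
  -- card of neighborhood ∩ X1
  have hNcard : ((johnsonGraph 10 3).neighborFinset v ∩ X1).card
      = ((star x y).erase v ∩ X1).card + ((star x z).erase v ∩ X1).card
        + ((star y z).erase v ∩ X1).card := by
    rw [hN, Finset.erase_union_distrib, Finset.erase_union_distrib,
      Finset.union_inter_distrib_right, Finset.union_inter_distrib_right,
      Finset.card_union_of_disjoint, Finset.card_union_of_disjoint hdAB]
    exact Finset.disjoint_union_left.mpr ⟨hdAC, hdBC⟩
  -- relate erased star counts to star counts
  have hstep : ∀ (S : Finset {s : Finset (Fin 10) // s.card = 3}), v ∈ S →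
      (S ∩ X1).card = (S.erase v ∩ X1).card + (if v ∈ X1 then 1 else 0) := by
    intro S hvS
    have he : S.erase v ∩ X1 = (S ∩ X1).erase v := by
      ext w
      simp only [Finset.mem_inter, Finset.mem_erase]
      tauto
    by_cases hvX : v ∈ X1
    · rw [he, if_pos hvX]
      exact (Finset.card_erase_add_one (Finset.mem_inter.mpr ⟨hvS, hvX⟩)).symm
    · rw [he, if_neg hvX, Finset.erase_eq_of_notMem (by simp [hvX]), Nat.add_zero]
  -- combine using the regularity condition
  obtain ⟨hu, hdisj, -, -, h1, h2⟩ := h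
  have hvmem : v ∈ X1 ∪ X2 := hu ▸ Finset.mem_univ v
  rw [Finset.mem_union] at hvmem
  have hA := hstep _ hvA
  have hB := hstep _ hvB
  have hC := hstep _ hvC
  rcases hvmem with hvX | hvX
  · have h12 := (h1 v hvX).1
    rw [hNcard] at h12
    rw [hind, if_pos hvX]
    rw [if_pos hvX] at hA hB hC
    push_cast [hA, hB, hC]
    -- (h12 already cast)
    linarith
  · have hvX1 : v ∉ X1 := fun hc => (Finset.disjoint_left.mp hdisj hc) hvX
    have h9 := (h2 v hvX).1
    rw [hNcard] at h9
    rw [hind, if_neg hvX1]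
    rw [if_neg hvX1] at hA hB hC
    push_cast [hA, hB, hC]
    -- (h9 already cast)
    linarith

lemma four_le (s : Finset (Fin 10)) (p q r t : Fin 10) (hsub : s ⊆ ({p, q, r, t} : Finset (Fin 10))) :
    s.card ≤ 4 := by
  refine le_trans (Finset.card_le_card hsub) ?_
  have h0 := Finset.card_insert_le p ({q, r, t} : Finset (Fin 10))
  have h1 := Finset.card_insert_le q ({r, t} : Finset (Fin 10))
  have h2 := Finset.card_insert_le r ({t} : Finset (Fin 10))
  have h3 : ({t} : Finset (Fin 10)).card = 1 := Finset.card_singleton t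
  omega

theorem lemma1_J103
    (X1 X2 : Finset {s : Finset (Fin 10) // s.card = 3})
    (h : IsPerfect2Coloring (johnsonGraph 10 3) X1 X2 12 9 9 12)
    (a b c d e : Fin 10)
    (hdist : ({a, b, c, d, e} : Finset (Fin 10)).card = 5) :
    ((star a b ∩ X1).card : ℤ) - ((star a c ∩ X1).card : ℤ) =
      3 * (ind X1 {a, b, d} + ind X1 {a, b, e} + ind X1 {c, d, e}
           - ind X1 {a, c, d} - ind X1 {a, c, e} - ind X1 {b, d, e}) := by
  have hab : a ≠ b := by
    intro hh
    have := four_le ({a, b, c, d, e} : Finset (Fin 10)) b c d e (by intro u hu; simp [hh] at hu; simp; tauto)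
    omega
  have hac : a ≠ c := by
    intro hh
    have := four_le ({a, b, c, d, e} : Finset (Fin 10)) b c d e (by intro u hu; simp [hh] at hu; simp; tauto)
    omega
  have had : a ≠ d := by
    intro hh
    have := four_le ({a, b, c, d, e} : Finset (Fin 10)) b c d e (by intro u hu; simp [hh] at hu; simp; tauto)
    omega
  have hae : a ≠ e := by
    intro hh
    have := four_le ({a, b, c, d, e} : Finset (Fin 10)) b c d e (by intro u hu; simp [hh] at hu; simp; tauto)
    omega
  have hbd : b ≠ d := by
    intro hh
    have := four_le ({a, b, c, d, e} : Finset (Fin 10)) a c d e (by intro u hu; simp [hh] at hu; simp; tauto)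
    omega
  have hbe : b ≠ e := by
    intro hh
    have := four_le ({a, b, c, d, e} : Finset (Fin 10)) a c d e (by intro u hu; simp [hh] at hu; simp; tauto)
    omega
  have hcd : c ≠ d := by
    intro hh
    have := four_le ({a, b, c, d, e} : Finset (Fin 10)) a b d e (by intro u hu; simp [hh] at hu; simp; tauto)
    omega
  have hce : c ≠ e := by
    intro hh
    have := four_le ({a, b, c, d, e} : Finset (Fin 10)) a b d e (by intro u hu; simp [hh] at hu; simp; tauto)
    omega
  have hde : d ≠ e := by
    intro hh
    have := four_le ({a, b, c, d, e} : Finset (Fin 10)) a b c e (by intro u hu; simp [hh] at hu; simp; tauto)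
    omega
  have E1 := key_eq X1 X2 h a b d hab had hbd
  have E2 := key_eq X1 X2 h a b e hab hae hbe
  have E3 := key_eq X1 X2 h c d e hcd hce hde
  have E4 := key_eq X1 X2 h a c d hac had hcd
  have E5 := key_eq X1 X2 h a c e hac hae hce
  have E6 := key_eq X1 X2 h b d e hbd hbe hde
  linarith
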